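/- arXiv:1808.07296 — 2 statements merged into one kernel-verified Lean document; each statement's English description precedes it below -/
import Mathlib

section
/- For all natural numbers i ≤ j, the binomial coefficients satisfy the congruence C(2j, 2i) ≡ C(j, i) (mod 4). -/
/-- `C(2n, 2k+1)` is even. -/
lemma even_choose_two_mul_odd (n k : ℕ) : 2 ∣ Nat.choose (2 * n) (2 * k + 1) := by
  rcases n with _ | m
  · simp
  · have h := Nat.add_one_mul_choose_eq (2 * m + 1) (2 * k)
    have h2 : 2 * m + 1 + 1 = 2 * (m + 1) := by omega
    rw [h2] at h
    -- h : 2 * (m+1) * choose (2*m+1) (2*k) = choose (2*(m+1)) (2*k+1) * (2*k+1)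
    have hdvd : 2 ∣ Nat.choose (2 * (m + 1)) (2 * k + 1) * (2 * k + 1) :=
      ⟨(m + 1) * Nat.choose (2 * m + 1) (2 * k), by rw [← h]; ring⟩
    have hcop : Nat.Coprime 2 (2 * k + 1) :=
      (Nat.prime_two).coprime_iff_not_dvd.mpr (by omega)
    exact (Nat.Coprime.dvd_of_dvd_mul_right hcop hdvd)

lemma choose_double_mod_four_aux : ∀ j i : ℕ,
    Nat.choose (2 * j) (2 * i) ≡ Nat.choose j i [MOD 4] := by
  intro j
  induction j with
  | zero =>
    intro i
    rcases i with _ | k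
    · rfl
    · simp [Nat.choose_eq_zero_of_lt]; rfl
  | succ j ih =>
    intro i
    rcases i with _ | k
    · simp [Nat.ModEq.refl]
    · have e1 : 2 * (j + 1) = (2 * j + 1) + 1 := by ring
      have e2 : 2 * (k + 1) = (2 * k + 1) + 1 := by ring
      rw [e1, e2, Nat.choose_succ_succ, Nat.choose_succ_succ, Nat.choose_succ_succ]
      calc Nat.choose (2 * j) (2 * k) + Nat.choose (2 * j) (2 * k + 1) +
            (Nat.choose (2 * j) (2 * k + 1) + Nat.choose (2 * j) (2 * k + 1 + 1))
          = (Nat.choose (2 * j) (2 * k) + Nat.choose (2 * j) (2 * (k + 1)))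
            + 2 * Nat.choose (2 * j) (2 * k + 1) := by
            have : 2 * k + 1 + 1 = 2 * (k + 1) := by ring
            rw [this]; ring_nf
        _ ≡ (Nat.choose j k + Nat.choose j (k + 1)) + 0 [MOD 4] := by
            apply Nat.ModEq.add
            · exact Nat.ModEq.add (ih k) (ih (k + 1))
            · obtain ⟨c, hc⟩ := even_choose_two_mul_odd j k
              rw [hc]
              show (2 * (2 * c)) % 4 = 0 % 4
              omega
        _ = Nat.choose (j + 1) (k + 1) := by
            rw [Nat.add_zero, Nat.choose_succ_succ]

/-- For all natural numbers `i ≤ j`, `C(2j, 2i) ≡ C(j, i) (mod 4)`. -/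
theorem choose_double_mod_four (i j : ℕ) (h : i ≤ j) :
    Nat.choose (2 * j) (2 * i) ≡ Nat.choose j i [MOD 4] :=
  choose_double_mod_four_aux j i
end

section
/- Let F be a field and let V, W be finite-dimensional F-vector spaces with dim V = m and dim W = n. Then there exists an F-linear equivalence ⋀^{mn}(V ⊗ W) ≃ (⋀^m V)^{⊗ n} ⊗ (⋀^n W)^{⊗ m}. -/
open TensorProduct

/-- The `k`-th tensor power of the base ring is equivalent to the base ring. -/
noncomputable def tensorPowerRingEquiv (F : Type) [CommRing F] :
    ∀ k : ℕ, (⨂[F]^k F) ≃ₗ[F] F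
  | 0 => PiTensorProduct.isEmptyEquiv (Fin 0)
  | (k + 1) =>
      (TensorPower.mulEquiv (R := F) (M := F) (n := k) (m := 1)).symm.trans <|
        (TensorProduct.congr (tensorPowerRingEquiv F k)
          (PiTensorProduct.subsingletonEquiv (0 : Fin 1))).trans
          (TensorProduct.lid F F)

/-- The top exterior power of a `d`-dimensional vector space is one-dimensional. -/
noncomputable def topExteriorPowerEquiv (F : Type) [Field F]
    (M : Type) [AddCommGroup M] [Module F M] (d : ℕ) (b : Module.Basis (Fin d) F M) :
    (⋀[F]^d M) ≃ₗ[F] F := by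
  classical
  set x : ExteriorAlgebra F M := ExteriorAlgebra.ιMulti F d b with hxdef
  have hx : x ≠ 0 := by
    intro h
    have h1 : ExteriorAlgebra.liftAlternating
        (Function.update (0 : ∀ i, M [⋀^Fin i]→ₗ[F] F) d b.det) x = 1 := by
      rw [hxdef, ExteriorAlgebra.liftAlternating_apply_ιMulti,
        Function.update_self, Module.Basis.det_self]
    rw [h, map_zero] at h1
    exact one_ne_zero (α := F) h1.symm
  have hspan : (⋀[F]^d M : Submodule F (ExteriorAlgebra F M))
      = Submodule.span F {x} := by
    refine le_antisymm ?_ ?_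
    · rw [← ExteriorAlgebra.ιMulti_span_fixedDegree]
      rw [Submodule.span_le]
      rintro _ ⟨v, rfl⟩
      -- show `ιMulti v` dies in the quotient by `span {x}`
      set S : Submodule F (ExteriorAlgebra F M) := Submodule.span F {x} with hS
      have hq : S.mkQ.compAlternatingMap (ExteriorAlgebra.ιMulti F d) = 0 := by
        refine Module.Basis.ext_alternating b fun g hg => ?_
        have hbij : Function.Bijective g := (Finite.injective_iff_bijective).1 hg
        let σ : Equiv.Perm (Fin d) := Equiv.ofBijective g hbij
        have hcomp : (fun i => b (g i)) = b ∘ σ := rfl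
        rw [hcomp]
        have hperm := (ExteriorAlgebra.ιMulti F d (M := M)).map_perm b σ
        simp only [LinearMap.compAlternatingMap_apply, hperm, AlternatingMap.zero_apply]
        rw [LinearMap.map_smul_of_tower]
        have hx0 : S.mkQ x = 0 := by
          rw [Submodule.mkQ_apply, Submodule.Quotient.mk_eq_zero]
          exact Submodule.subset_span rfl
        rw [hx0, smul_zero]
      have h0 : S.mkQ (ExteriorAlgebra.ιMulti F d v) = 0 := by
        have := AlternatingMap.congr_fun hq v
        simpa using this
      rwa [Submodule.mkQ_apply, Submodule.Quotient.mk_eq_zero] at h0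
    · rw [Submodule.span_le, Set.singleton_subset_iff]
      exact ExteriorAlgebra.ιMulti_range F d ⟨⇑b, rfl⟩
  exact (LinearEquiv.ofEq _ _ hspan).trans
    (LinearEquiv.toSpanNonzeroSingleton F _ x hx).symm

/-- For finite-dimensional `F`-vector spaces `V`, `W` of dimensions `m`, `n`, there is an
`F`-linear equivalence `⋀^{mn}(V ⊗ W) ≃ (⋀^m V)^{⊗n} ⊗ (⋀^n W)^{⊗m}`. -/
theorem det_of_tensor_product (F : Type) [Field F]
    (V W : Type) [AddCommGroup V] [Module F V] [AddCommGroup W] [Module F W]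
    [FiniteDimensional F V] [FiniteDimensional F W] (m n : ℕ)
    (hV : Module.finrank F V = m) (hW : Module.finrank F W = n) :
    Nonempty ((⋀[F]^(m * n) (V ⊗[F] W)) ≃ₗ[F]
      (⨂[F]^n (⋀[F]^m V)) ⊗[F] (⨂[F]^m (⋀[F]^n W))) := by
  have hVW : Module.finrank F (V ⊗[F] W) = m * n := by
    rw [Module.finrank_tensorProduct, hV, hW]
  let bVW : Module.Basis (Fin (m * n)) F (V ⊗[F] W) := Module.finBasisOfFinrankEq F _ hVW
  let bV : Module.Basis (Fin m) F V := Module.finBasisOfFinrankEq F _ hV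
  let bW : Module.Basis (Fin n) F W := Module.finBasisOfFinrankEq F _ hW
  let eL : (⋀[F]^(m * n) (V ⊗[F] W)) ≃ₗ[F] F := topExteriorPowerEquiv F _ _ bVW
  let eV : (⋀[F]^m V) ≃ₗ[F] F := topExteriorPowerEquiv F _ _ bV
  let eW : (⋀[F]^n W) ≃ₗ[F] F := topExteriorPowerEquiv F _ _ bW
  let eRV : (⨂[F]^n (⋀[F]^m V)) ≃ₗ[F] F :=
    (PiTensorProduct.congr fun _ => eV).trans (tensorPowerRingEquiv F n)
  let eRW : (⨂[F]^m (⋀[F]^n W)) ≃ₗ[F] F :=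
    (PiTensorProduct.congr fun _ => eW).trans (tensorPowerRingEquiv F m)
  exact ⟨eL.trans ((TensorProduct.congr eRV eRW).trans (TensorProduct.lid F F)).symm⟩
end
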